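/- Let ρ be a bipartite density matrix on H_A ⊗ H_B whose marginals ρ_A, ρ_B are Gibbs states at inverse temperatures β_A, β_B for Hamiltonians H_A, H_B. Let U be a unitary with [U, H_A⊗1 + 1⊗H_B] = 0 and ρ' = UρU†. Then (β_A - β_B)⟨Q_A⟩ ≥ ΔI(A:B), where ⟨Q_A⟩ = Tr{(ρ'_A - ρ_A)H_A} and ΔI(A:B) = I_{ρ'}(A:B) - I_ρ(A:B) is the change in quantum mutual information. -/

import Mathlib

open Matrix ComplexOrder Kronecker NormedSpace

/-- Partial trace over the second factor. -/
noncomputable def ptraceB {a b : ℕ} (ρ : Matrix (Fin a × Fin b) (Fin a × Fin b) ℂ) :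
    Matrix (Fin a) (Fin a) ℂ :=
  Matrix.of fun i j => ∑ k : Fin b, ρ (i, k) (j, k)

/-- Partial trace over the first factor. -/
noncomputable def ptraceA {a b : ℕ} (ρ : Matrix (Fin a × Fin b) (Fin a × Fin b) ℂ) :
    Matrix (Fin b) (Fin b) ℂ :=
  Matrix.of fun i j => ∑ k : Fin a, ρ (k, i) (k, j)

/-- The Gibbs (thermal) state `e^{-βH}/Tr e^{-βH}`. -/
noncomputable def gibbs {n : Type*} [Fintype n] [DecidableEq n] (β : ℝ) (Hm : Matrix (n) (n) ℂ) :
    Matrix (n) (n) ℂ :=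
  ((exp ((-β : ℂ) • Hm)).trace)⁻¹ • exp ((-β : ℂ) • Hm)

/-- Von Neumann entropy `-Tr ρ log ρ`, via the eigenvalues of a Hermitian matrix
(junk value `0` on non-Hermitian input). -/
noncomputable def vnEntropy {n : Type*} [Fintype n] [DecidableEq n] (ρ : Matrix (n) (n) ℂ) : ℝ :=
  if h : ρ.IsHermitian then -∑ i, (h.eigenvalues i) * Real.log (h.eigenvalues i) else 0

/-- Logarithm of a Hermitian matrix via the spectral theorem
(junk value `0` on non-Hermitian input). -/
noncomputable def hermLog {n : Type*} [Fintype n] [DecidableEq n] (A : Matrix (n) (n) ℂ) :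
    Matrix (n) (n) ℂ :=
  if h : A.IsHermitian then
    (Matrix.IsHermitian.eigenvectorUnitary h : Matrix (n) (n) ℂ)
      * Matrix.diagonal (fun i => (Real.log (h.eigenvalues i) : ℂ))
      * star (Matrix.IsHermitian.eigenvectorUnitary h : Matrix (n) (n) ℂ)
  else 0

/-- Quantum relative entropy `S(σ‖ρ) = Tr{σ log σ − σ log ρ}`. -/
noncomputable def relEntropy {n : Type*} [Fintype n] [DecidableEq n] (σ ρ : Matrix (n) (n) ℂ) : ℝ :=
  (σ * hermLog σ - σ * hermLog ρ).trace.re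

/-- Quantum mutual information `I_ρ(A:B) = S(ρ_A) + S(ρ_B) − S(ρ)`. -/
noncomputable def mutualInfo {a b : ℕ} (ρ : Matrix (Fin a × Fin b) (Fin a × Fin b) ℂ) : ℝ :=
  vnEntropy (ptraceB ρ) + vnEntropy (ptraceA ρ) - vnEntropy ρ


section Helpers
open Polynomial

variable {n : Type*} [Fintype n] [DecidableEq n]

omit [DecidableEq n] in
lemma mapC_mul (M N : Matrix n n ℂ) : (M * N).map C = M.map C * N.map C := by
  simp [Matrix.map_mul]

lemma charpoly_conj (V A : Matrix n n ℂ) (hV : V * Vᴴ = 1) :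
    (V * A * Vᴴ).charpoly = A.charpoly := by
  have h1 : V.map C * Vᴴ.map C = 1 := by
    rw [← mapC_mul, hV]
    refine Matrix.ext fun i j => ?_
    by_cases h : i = j <;> simp [h, Matrix.one_apply]
  have hc : charmatrix (V * A * Vᴴ) = V.map C * charmatrix A * Vᴴ.map C := by
    rw [charmatrix, charmatrix, mul_sub, sub_mul]
    congr 1
    · have := (scalar_commute (X : ℂ[X]) (fun r => Commute.all _ _) (Vᴴ.map C)).symm
      rw [mul_assoc, ← this, ← mul_assoc, h1, one_mul]
    · simp only [RingHom.mapMatrix_apply, mapC_mul]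
  rw [Matrix.charpoly, hc, Matrix.det_mul, Matrix.det_mul, mul_right_comm,
    ← Matrix.det_mul, h1, Matrix.det_one, one_mul, Matrix.charpoly]

lemma charpoly_diag (d : n → ℂ) :
    (Matrix.diagonal d).charpoly = (Finset.univ.val.map fun i => (X : ℂ[X]) - C (d i)).prod := by
  have : charmatrix (Matrix.diagonal d) = Matrix.diagonal (fun i => (X : ℂ[X]) - C (d i)) := by
    refine Matrix.ext fun i j => ?_
    by_cases h : i = j
    · subst h; simp [charmatrix_apply_eq]
    · rw [charmatrix_apply_ne _ _ _ h, Matrix.diagonal_apply_ne _ h, Matrix.diagonal_apply_ne _ h]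
      simp
  rw [Matrix.charpoly, this, Matrix.det_diagonal, Finset.prod_eq_multiset_prod]

lemma unitary_props (W : Matrix.unitaryGroup n ℂ) :
    (W : Matrix n n ℂ) * (W : Matrix n n ℂ)ᴴ = 1 ∧ (W : Matrix n n ℂ)ᴴ * (W : Matrix n n ℂ) = 1 := by
  constructor
  · simpa [Matrix.star_eq_conjTranspose] using W.2.2
  · simpa [Matrix.star_eq_conjTranspose] using W.2.1

/-- If a Hermitian matrix is unitarily conjugate to a real diagonal, the multiset of its
Mathlib eigenvalues equals the multiset of diagonal entries. -/
lemma eig_multiset {A V : Matrix n n ℂ} (hA : A.IsHermitian) (hV : V * Vᴴ = 1)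
    (d : n → ℝ) (hAd : A = V * Matrix.diagonal (fun i => (d i : ℂ)) * Vᴴ) :
    Finset.univ.val.map hA.eigenvalues = Finset.univ.val.map d := by
  have hW := unitary_props (hA.eigenvectorUnitary)
  have hspec := hA.spectral_theorem
  rw [Unitary.conjStarAlgAut_apply, Matrix.star_eq_conjTranspose] at hspec
  have h1 : A.charpoly = (Finset.univ.val.map fun i => (X : ℂ[X]) - C ((hA.eigenvalues i : ℂ))).prod := by
    conv_lhs => rw [hspec]
    rw [charpoly_conj _ _ hW.1, charpoly_diag]
    rfl
  have h2 : A.charpoly = (Finset.univ.val.map fun i => (X : ℂ[X]) - C ((d i : ℂ))).prod := by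
    conv_lhs => rw [hAd]
    rw [charpoly_conj _ _ hV, charpoly_diag]
  have hnest : ∀ (e : n → ℝ), (Multiset.map (fun i => (X : ℂ[X]) - C ((e i : ℂ))) Finset.univ.val)
      = Multiset.map (fun a => (X : ℂ[X]) - C a) (Finset.univ.val.map (fun i => ((e i : ℂ)))) := by
    intro e; rw [Multiset.map_map]; rfl
  have h3 : (Finset.univ.val.map fun i => ((hA.eigenvalues i : ℂ))) =
      (Finset.univ.val.map fun i => ((d i : ℂ))) := by
    have := congrArg Polynomial.roots (h1.symm.trans h2)
    rwa [hnest, hnest, Polynomial.roots_multiset_prod_X_sub_C,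
      Polynomial.roots_multiset_prod_X_sub_C] at this
  have h4 := congrArg (Multiset.map Complex.re) h3
  rw [Multiset.map_map, Multiset.map_map] at h4
  convert h4 using 2
  all_goals simp
  
/-- Sum of a function of eigenvalues, via any real-diagonal unitary decomposition. -/
lemma sum_f_eig {A V : Matrix n n ℂ} (hA : A.IsHermitian) (hV : V * Vᴴ = 1)
    (d : n → ℝ) (hAd : A = V * Matrix.diagonal (fun i => (d i : ℂ)) * Vᴴ) (f : ℝ → ℝ) :
    ∑ i, f (hA.eigenvalues i) = ∑ i, f (d i) := by
  have key : ∀ (e : n → ℝ), ∑ i, f (e i) = (Multiset.map f (Finset.univ.val.map e)).sum := by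
    intro e; rw [Multiset.map_map]; rfl
  rw [key, key, eig_multiset hA hV d hAd]


lemma exp_conj_unitary (V A : Matrix n n ℂ) (hV : V * Vᴴ = 1) (hV' : Vᴴ * V = 1) :
    exp (V * A * Vᴴ) = V * exp A * Vᴴ := by
  let u : (Matrix n n ℂ)ˣ := ⟨V, Vᴴ, hV, hV'⟩
  have h1 : (↑u⁻¹ : Matrix n n ℂ) = Vᴴ := rfl
  have h2 : (↑u : Matrix n n ℂ) = V := rfl
  have := Matrix.exp_units_conj u A
  rwa [h1, h2] at this

lemma smul_H_eq (H : Matrix n n ℂ) (hH : H.IsHermitian) (β : ℝ) :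
    (-β : ℂ) • H = (hH.eigenvectorUnitary : Matrix n n ℂ)
      * Matrix.diagonal (fun i => ((-β * hH.eigenvalues i : ℝ) : ℂ))
      * (hH.eigenvectorUnitary : Matrix n n ℂ)ᴴ := by
  conv_lhs => rw [hH.spectral_theorem]
  rw [Unitary.conjStarAlgAut_apply, Matrix.star_eq_conjTranspose, ← smul_mul_assoc, ← mul_smul_comm]
  congr 2
  ext i j
  by_cases h : i = j
  · subst h
    simp only [Matrix.smul_apply, Matrix.diagonal_apply_eq, Function.comp, smul_eq_mul]
    push_cast
    rfl
  · simp [Matrix.diagonal_apply_ne _ h]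

lemma exp_smul_H (H : Matrix n n ℂ) (hH : H.IsHermitian) (β : ℝ) :
    exp ((-β : ℂ) • H) = (hH.eigenvectorUnitary : Matrix n n ℂ)
      * Matrix.diagonal (fun i => ((Real.exp (-β * hH.eigenvalues i) : ℝ) : ℂ))
      * (hH.eigenvectorUnitary : Matrix n n ℂ)ᴴ := by
  have hV : (hH.eigenvectorUnitary : Matrix n n ℂ) * (hH.eigenvectorUnitary : Matrix n n ℂ)ᴴ = 1 := by
    simpa [Matrix.star_eq_conjTranspose] using hH.eigenvectorUnitary.2.2
  have hV' : (hH.eigenvectorUnitary : Matrix n n ℂ)ᴴ * (hH.eigenvectorUnitary : Matrix n n ℂ) = 1 := by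
    simpa [Matrix.star_eq_conjTranspose] using hH.eigenvectorUnitary.2.1
  rw [smul_H_eq H hH β, exp_conj_unitary _ _ hV hV', Matrix.exp_diagonal, Pi.exp_def]
  have he : (fun i => exp ((((-β * hH.eigenvalues i : ℝ)) : ℂ)))
      = fun i => ((Real.exp (-β * hH.eigenvalues i) : ℝ) : ℂ) := by
    funext i
    rw [← Complex.exp_eq_exp_ℂ, ← Complex.ofReal_exp]
  rw [he]

lemma trace_conj_diag (V : Matrix n n ℂ) (hV' : Vᴴ * V = 1) (d : n → ℂ) :
    (V * Matrix.diagonal d * Vᴴ).trace = ∑ i, d i := by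
  rw [Matrix.trace_mul_cycle, hV', one_mul, Matrix.trace_diagonal]

lemma exp_trace_eq (H : Matrix n n ℂ) (hH : H.IsHermitian) (β : ℝ) :
    (exp ((-β : ℂ) • H)).trace = ((∑ j, Real.exp (-β * hH.eigenvalues j) : ℝ) : ℂ) := by
  have hV' : (hH.eigenvectorUnitary : Matrix n n ℂ)ᴴ * (hH.eigenvectorUnitary : Matrix n n ℂ) = 1 := by
    simpa [Matrix.star_eq_conjTranspose] using hH.eigenvectorUnitary.2.1
  rw [exp_smul_H H hH β, trace_conj_diag _ hV']
  push_cast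
  rfl

lemma gibbs_eq (H : Matrix n n ℂ) (hH : H.IsHermitian) (β : ℝ) :
    gibbs β H = (hH.eigenvectorUnitary : Matrix n n ℂ)
      * Matrix.diagonal (fun i => ((Real.exp (-β * hH.eigenvalues i)
          / ∑ j, Real.exp (-β * hH.eigenvalues j) : ℝ) : ℂ))
      * (hH.eigenvectorUnitary : Matrix n n ℂ)ᴴ := by
  rw [gibbs, exp_trace_eq H hH β, exp_smul_H H hH β, ← smul_mul_assoc, ← mul_smul_comm]
  congr 2
  ext i j
  by_cases h : i = j
  · subst h
    simp only [Matrix.smul_apply, Matrix.diagonal_apply_eq]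
    push_cast
    rw [smul_eq_mul, div_eq_inv_mul]
  · simp [Matrix.diagonal_apply_ne _ h]

lemma isHermitian_of_decomp {A V : Matrix n n ℂ} (d : n → ℝ)
    (hAd : A = V * Matrix.diagonal (fun i => ((d i : ℝ) : ℂ)) * Vᴴ) : A.IsHermitian := by
  have hd : (Matrix.diagonal fun i => ((d i : ℝ) : ℂ))ᴴ = Matrix.diagonal fun i => ((d i : ℝ) : ℂ) := by
    have hs : (star fun i => ((d i : ℝ) : ℂ)) = fun i => ((d i : ℝ) : ℂ) :=
      funext fun i => Complex.conj_ofReal _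
    rw [Matrix.diagonal_conjTranspose, hs]
  rw [hAd]
  show _ᴴ = _
  rw [Matrix.conjTranspose_mul, Matrix.conjTranspose_mul, Matrix.conjTranspose_conjTranspose, hd]
  noncomm_ring

lemma vnEntropy_eq {A : Matrix n n ℂ} (hA : A.IsHermitian) :
    vnEntropy A = -∑ i, hA.eigenvalues i * Real.log (hA.eigenvalues i) := by
  rw [vnEntropy, dif_pos hA]

lemma vnEntropy_of_decomp {A V : Matrix n n ℂ} (hA : A.IsHermitian) (hV : V * Vᴴ = 1)
    (d : n → ℝ) (hAd : A = V * Matrix.diagonal (fun i => ((d i : ℝ) : ℂ)) * Vᴴ) :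
    vnEntropy A = -∑ i, d i * Real.log (d i) := by
  rw [vnEntropy_eq hA]
  congr 1
  exact sum_f_eig hA hV d hAd (fun t => t * Real.log t)

lemma klein_term {p q : ℝ} (hp : 0 ≤ p) (hq : 0 < q) :
    p - q ≤ p * Real.log p - p * Real.log q := by
  rcases eq_or_lt_of_le hp with h | h
  · rw [← h]
    nlinarith [hq.le]
  · have hlog := Real.log_le_sub_one_of_pos (div_pos hq h)
    rw [Real.log_div hq.ne' h.ne'] at hlog
    have hqp : q / p * p = q := div_mul_cancel₀ _ h.ne'
    nlinarith

lemma trace_eq_sum_eig {A : Matrix n n ℂ} (hA : A.IsHermitian) :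
    A.trace = ((∑ i, hA.eigenvalues i : ℝ) : ℂ) := by
  have hV' : (hA.eigenvectorUnitary : Matrix n n ℂ)ᴴ * (hA.eigenvectorUnitary : Matrix n n ℂ) = 1 := by
    simpa [Matrix.star_eq_conjTranspose] using hA.eigenvectorUnitary.2.1
  conv_lhs => rw [hA.spectral_theorem]
  rw [Unitary.conjStarAlgAut_apply, Matrix.star_eq_conjTranspose, trace_conj_diag _ hV']
  push_cast
  rfl

lemma trace_conj_diag_diag (M : Matrix n n ℂ) (c d : n → ℂ) :
    (Mᴴ * Matrix.diagonal c * M * Matrix.diagonal d).trace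
      = ∑ i, ∑ j, c i * d j * ((Complex.normSq (M i j) : ℝ) : ℂ) := by
  have hdiag : ∀ a, (Mᴴ * Matrix.diagonal c * M * Matrix.diagonal d) a a
      = ∑ b, c b * d a * ((Complex.normSq (M b a) : ℝ) : ℂ) := by
    intro a
    rw [Matrix.mul_diagonal, Matrix.mul_apply, Finset.sum_mul]
    refine Finset.sum_congr rfl fun b _ => ?_
    rw [Matrix.mul_diagonal, Matrix.conjTranspose_apply, Complex.normSq_eq_conj_mul_self]
    simp only [Complex.star_def]
    ring
  rw [Matrix.trace]
  simp only [Matrix.diag_apply]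
  rw [Finset.sum_congr rfl fun a _ => hdiag a]
  rw [Finset.sum_comm]

lemma rowsum_one {M : Matrix n n ℂ} (h : M * Mᴴ = 1) (i : n) :
    ∑ j, Complex.normSq (M i j) = 1 := by
  have h1 : (M * Mᴴ) i i = 1 := by rw [h, Matrix.one_apply_eq]
  rw [Matrix.mul_apply] at h1
  simp only [Matrix.conjTranspose_apply] at h1
  have : ∀ j, M i j * star (M i j) = ((Complex.normSq (M i j) : ℝ) : ℂ) := fun j =>
    Complex.mul_conj _
  rw [Finset.sum_congr rfl fun j _ => this j] at h1
  exact_mod_cast h1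

lemma colsum_one {M : Matrix n n ℂ} (h : Mᴴ * M = 1) (j : n) :
    ∑ i, Complex.normSq (M i j) = 1 := by
  have h1 : (Mᴴ * M) j j = 1 := by rw [h, Matrix.one_apply_eq]
  rw [Matrix.mul_apply] at h1
  simp only [Matrix.conjTranspose_apply] at h1
  have : ∀ i, star (M i j) * M i j = ((Complex.normSq (M i j) : ℝ) : ℂ) := fun i =>
    (Complex.normSq_eq_conj_mul_self).symm
  rw [Finset.sum_congr rfl fun i _ => this i] at h1
  exact_mod_cast h1

/-- Trace of a product of two Hermitian matrices in terms of eigenvalues and overlaps. -/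
lemma trace_mul_herm {A B : Matrix n n ℂ} (hA : A.IsHermitian) (hB : B.IsHermitian) :
    (A * B).trace = ∑ i, ∑ j, ((hA.eigenvalues i : ℂ) * (hB.eigenvalues j : ℂ)) *
      ((Complex.normSq (((hA.eigenvectorUnitary : Matrix n n ℂ)ᴴ
        * (hB.eigenvectorUnitary : Matrix n n ℂ)) i j) : ℝ) : ℂ) := by
  set W : Matrix n n ℂ := (hA.eigenvectorUnitary : Matrix n n ℂ) with hW
  set V : Matrix n n ℂ := (hB.eigenvectorUnitary : Matrix n n ℂ) with hVdef
  set p := hA.eigenvalues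
  set e := hB.eigenvalues
  have hPd : (Matrix.diagonal (RCLike.ofReal ∘ p) : Matrix n n ℂ)
      = Matrix.diagonal (fun i => ((p i : ℝ) : ℂ)) := rfl
  have hEd : (Matrix.diagonal (RCLike.ofReal ∘ e) : Matrix n n ℂ)
      = Matrix.diagonal (fun i => ((e i : ℝ) : ℂ)) := rfl
  have hstep : A * B = (W * Matrix.diagonal (fun i => ((p i : ℝ) : ℂ)) * Wᴴ * V
      * Matrix.diagonal (fun i => ((e i : ℝ) : ℂ))) * Vᴴ := by
    conv_lhs => rw [hA.spectral_theorem, hB.spectral_theorem]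
    rw [Unitary.conjStarAlgAut_apply, Unitary.conjStarAlgAut_apply, Matrix.star_eq_conjTranspose, Matrix.star_eq_conjTranspose, hPd, hEd, ← hW, ← hVdef]
    noncomm_ring
  have hstep2 : Vᴴ * (W * Matrix.diagonal (fun i => ((p i : ℝ) : ℂ)) * Wᴴ * V
      * Matrix.diagonal (fun i => ((e i : ℝ) : ℂ)))
      = (Wᴴ * V)ᴴ * Matrix.diagonal (fun i => ((p i : ℝ) : ℂ)) * (Wᴴ * V)
        * Matrix.diagonal (fun i => ((e i : ℝ) : ℂ)) := by
    rw [Matrix.conjTranspose_mul, Matrix.conjTranspose_conjTranspose]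
    noncomm_ring
  rw [hstep, Matrix.trace_mul_comm, hstep2, trace_conj_diag_diag]

lemma unitary_mul_unitary {W V : Matrix n n ℂ} (hW : W * Wᴴ = 1) (hW' : Wᴴ * W = 1)
    (hV : V * Vᴴ = 1) (hV' : Vᴴ * V = 1) :
    (Wᴴ * V) * (Wᴴ * V)ᴴ = 1 ∧ (Wᴴ * V)ᴴ * (Wᴴ * V) = 1 := by
  constructor
  · rw [Matrix.conjTranspose_mul, Matrix.conjTranspose_conjTranspose]
    calc Wᴴ * V * (Vᴴ * W) = Wᴴ * (V * Vᴴ) * W := by noncomm_ring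
    _ = 1 := by rw [hV, mul_one, hW']
  · rw [Matrix.conjTranspose_mul, Matrix.conjTranspose_conjTranspose]
    calc Vᴴ * W * (Wᴴ * V) = Vᴴ * (W * Wᴴ) * V := by noncomm_ring
    _ = 1 := by rw [hW, mul_one, hV']

/-- Key inequality: entropy bounded by `β⟨H⟩ + log Z`. -/
lemma entropy_le_beta_trace [Nonempty n] (σ H : Matrix n n ℂ) (hσ : σ.PosSemidef)
    (hσ1 : σ.trace = 1) (hH : H.IsHermitian) (β : ℝ) :
    vnEntropy σ ≤ β * (σ * H).trace.re + Real.log (∑ j, Real.exp (-β * hH.eigenvalues j)) := by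
  set p := hσ.1.eigenvalues with hpdef
  set e := hH.eigenvalues with hedef
  set Z := ∑ j, Real.exp (-β * e j) with hZdef
  set q : n → ℝ := fun j => Real.exp (-β * e j) / Z with hqdef
  set M : Matrix n n ℂ := (hσ.1.eigenvectorUnitary : Matrix n n ℂ)ᴴ
      * (hH.eigenvectorUnitary : Matrix n n ℂ) with hMdef
  set c : n → n → ℝ := fun i j => Complex.normSq (M i j) with hcdef
  have hZ : 0 < Z := Finset.sum_pos (fun j _ => Real.exp_pos _) Finset.univ_nonempty
  have hq : ∀ j, 0 < q j := fun j => div_pos (Real.exp_pos _) hZ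
  have hsumq : ∑ j, q j = 1 := by
    rw [hqdef, ← Finset.sum_div]
    exact div_self hZ.ne'
  have hlogq : ∀ j, Real.log (q j) = -β * e j - Real.log Z := fun j => by
    rw [hqdef, Real.log_div (Real.exp_ne_zero _) hZ.ne', Real.log_exp]
  have hp : ∀ i, 0 ≤ p i := fun i => hσ.eigenvalues_nonneg i
  have hsump : ∑ i, p i = 1 := by
    have := trace_eq_sum_eig hσ.1
    rw [hσ1] at this
    exact_mod_cast this.symm
  have hMu := unitary_mul_unitary (unitary_props hσ.1.eigenvectorUnitary).1
    (unitary_props hσ.1.eigenvectorUnitary).2 (unitary_props hH.eigenvectorUnitary).1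
    (unitary_props hH.eigenvectorUnitary).2
  have hrow : ∀ i, ∑ j, c i j = 1 := fun i => rowsum_one hMu.1 i
  have hcol : ∀ j, ∑ i, c i j = 1 := fun j => colsum_one hMu.2 j
  have hcnn : ∀ i j, 0 ≤ c i j := fun i j => Complex.normSq_nonneg _
  have htr : (σ * H).trace.re = ∑ i, ∑ j, p i * e j * c i j := by
    rw [trace_mul_herm hσ.1 hH]
    rw [Complex.re_sum]
    refine Finset.sum_congr rfl fun i _ => ?_
    rw [Complex.re_sum]
    refine Finset.sum_congr rfl fun j _ => ?_
    rw [← Complex.ofReal_mul, ← Complex.ofReal_mul, Complex.ofReal_re]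
  have hS : vnEntropy σ = -∑ i, p i * Real.log (p i) := vnEntropy_eq hσ.1
  -- the Klein-type bound
  have hkey_nonneg : 0 ≤ ∑ i, ∑ j, c i j * (p i * Real.log (p i) - p i * Real.log (q j)) := by
    have hlow : ∑ i, ∑ j, c i j * (p i - q j)
        ≤ ∑ i, ∑ j, c i j * (p i * Real.log (p i) - p i * Real.log (q j)) :=
      Finset.sum_le_sum fun i _ => Finset.sum_le_sum fun j _ =>
        mul_le_mul_of_nonneg_left (klein_term (hp i) (hq j)) (hcnn i j)
    have hzero : ∑ i, ∑ j, c i j * (p i - q j) = 0 := by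
      have h1 : ∑ i, ∑ j, c i j * (p i - q j)
          = ∑ i, ∑ j, c i j * p i - ∑ i, ∑ j, c i j * q j := by
        simp [mul_sub, Finset.sum_sub_distrib]
      have h2 : ∑ i, ∑ j, c i j * p i = 1 := by
        have : ∀ i, ∑ j, c i j * p i = p i := by
          intro i
          rw [← Finset.sum_mul, hrow i, one_mul]
        rw [Finset.sum_congr rfl fun i _ => this i, hsump]
      have h3 : ∑ i, ∑ j, c i j * q j = 1 := by
        rw [Finset.sum_comm]
        have : ∀ j, ∑ i, c i j * q j = q j := by
          intro j
          rw [← Finset.sum_mul, hcol j, one_mul]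
        rw [Finset.sum_congr rfl fun j _ => this j, hsumq]
      rw [h1, h2, h3, sub_self]
    linarith
  have hkey_eq : ∑ i, ∑ j, c i j * (p i * Real.log (p i) - p i * Real.log (q j))
      = (∑ i, p i * Real.log (p i)) + β * (∑ i, ∑ j, p i * e j * c i j)
        + Real.log Z := by
    have hterm : ∀ i j, c i j * (p i * Real.log (p i) - p i * Real.log (q j))
        = c i j * (p i * Real.log (p i)) + β * (p i * e j * c i j)
          + (c i j * p i) * Real.log Z := by
      intro i j
      rw [hlogq j]
      ring
    rw [Finset.sum_congr rfl fun i _ => Finset.sum_congr rfl fun j _ => hterm i j]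
    simp only [Finset.sum_add_distrib]
    have e1 : ∑ i, ∑ j, c i j * (p i * Real.log (p i)) = ∑ i, p i * Real.log (p i) := by
      refine Finset.sum_congr rfl fun i _ => ?_
      rw [← Finset.sum_mul, hrow i, one_mul]
    have e2 : ∑ i, ∑ j, β * (p i * e j * c i j) = β * ∑ i, ∑ j, p i * e j * c i j := by
      rw [Finset.mul_sum]
      exact Finset.sum_congr rfl fun i _ => (Finset.mul_sum _ _ _).symm
    have e3 : ∑ i, ∑ j, (c i j * p i) * Real.log Z = Real.log Z := by
      have : ∀ i, ∑ j, (c i j * p i) * Real.log Z = p i * Real.log Z := by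
        intro i
        rw [← Finset.sum_mul, ← Finset.sum_mul, hrow i, one_mul]
      rw [Finset.sum_congr rfl fun i _ => this i, ← Finset.sum_mul, hsump, one_mul]
    rw [e1, e2, e3]
  rw [hS, htr]
  linarith [hkey_nonneg, hkey_eq]

/-- Equality for the Gibbs state itself. -/
lemma entropy_gibbs [Nonempty n] (H : Matrix n n ℂ) (hH : H.IsHermitian) (β : ℝ) :
    vnEntropy (gibbs β H) = β * ((gibbs β H) * H).trace.re
      + Real.log (∑ j, Real.exp (-β * hH.eigenvalues j)) := by
  set e := hH.eigenvalues with hedef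
  set Z := ∑ j, Real.exp (-β * e j) with hZdef
  set q : n → ℝ := fun j => Real.exp (-β * e j) / Z with hqdef
  set V : Matrix n n ℂ := (hH.eigenvectorUnitary : Matrix n n ℂ) with hVdef
  have hV := (unitary_props hH.eigenvectorUnitary).1
  have hV' := (unitary_props hH.eigenvectorUnitary).2
  have hZ : 0 < Z := Finset.sum_pos (fun j _ => Real.exp_pos _) Finset.univ_nonempty
  have hq : ∀ j, 0 < q j := fun j => div_pos (Real.exp_pos _) hZ
  have hsumq : ∑ j, q j = 1 := by
    rw [hqdef, ← Finset.sum_div]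
    exact div_self hZ.ne'
  have hlogq : ∀ j, Real.log (q j) = -β * e j - Real.log Z := fun j => by
    rw [hqdef, Real.log_div (Real.exp_ne_zero _) hZ.ne', Real.log_exp]
  have hgd : gibbs β H = V * Matrix.diagonal (fun i => ((q i : ℝ) : ℂ)) * Vᴴ :=
    gibbs_eq H hH β
  have hherm : (gibbs β H).IsHermitian := isHermitian_of_decomp q hgd
  have hent : vnEntropy (gibbs β H) = -∑ j, q j * Real.log (q j) :=
    vnEntropy_of_decomp hherm hV q hgd
  have hmul : gibbs β H * H = V * Matrix.diagonal (fun i => ((q i : ℝ) : ℂ)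
      * ((e i : ℝ) : ℂ)) * Vᴴ := by
    conv_lhs => rw [hgd, hH.spectral_theorem]
    rw [Unitary.conjStarAlgAut_apply, Matrix.star_eq_conjTranspose, ← hVdef]
    have : (Matrix.diagonal (RCLike.ofReal ∘ e) : Matrix n n ℂ)
        = Matrix.diagonal (fun i => ((e i : ℝ) : ℂ)) := rfl
    rw [this]
    calc V * Matrix.diagonal (fun i => ((q i : ℝ) : ℂ)) * Vᴴ
          * (V * Matrix.diagonal (fun i => ((e i : ℝ) : ℂ)) * Vᴴ)
        = V * Matrix.diagonal (fun i => ((q i : ℝ) : ℂ)) * (Vᴴ * V)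
          * Matrix.diagonal (fun i => ((e i : ℝ) : ℂ)) * Vᴴ := by noncomm_ring
      _ = V * (Matrix.diagonal (fun i => ((q i : ℝ) : ℂ))
          * Matrix.diagonal (fun i => ((e i : ℝ) : ℂ))) * Vᴴ := by
            rw [hV']; noncomm_ring
      _ = V * Matrix.diagonal (fun i => ((q i : ℝ) : ℂ) * ((e i : ℝ) : ℂ)) * Vᴴ := by
            rw [Matrix.diagonal_mul_diagonal]
  have htr : ((gibbs β H) * H).trace.re = ∑ j, q j * e j := by
    rw [hmul, trace_conj_diag _ hV', Complex.re_sum]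
    refine Finset.sum_congr rfl fun j _ => ?_
    rw [← Complex.ofReal_mul, Complex.ofReal_re]
  rw [hent, htr]
  have : ∀ j, -(q j * Real.log (q j)) = β * (q j * e j) + q j * Real.log Z := by
    intro j
    rw [hlogq j]
    ring
  rw [← Finset.sum_neg_distrib, Finset.sum_congr rfl fun j _ => this j,
    Finset.sum_add_distrib, ← Finset.mul_sum, ← Finset.sum_mul, hsumq, one_mul]

/-- Entropy difference bound against a Gibbs reference. -/
lemma entropy_diff_le [Nonempty n] (σ H : Matrix n n ℂ) (hσ : σ.PosSemidef)
    (hσ1 : σ.trace = 1) (hH : H.IsHermitian) (β : ℝ) :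
    vnEntropy σ - vnEntropy (gibbs β H) ≤ β * ((σ - gibbs β H) * H).trace.re := by
  have h1 := entropy_le_beta_trace σ H hσ hσ1 hH β
  have h2 := entropy_gibbs H hH β
  have h3 : ((σ - gibbs β H) * H).trace.re = (σ * H).trace.re - (gibbs β H * H).trace.re := by
    rw [Matrix.sub_mul, Matrix.trace_sub, Complex.sub_re]
  rw [h3]
  linarith

/-- Unitary invariance of von Neumann entropy. -/
lemma vnEntropy_conj {ρ U : Matrix n n ℂ} (hρ : ρ.IsHermitian)
    (hU : U * Uᴴ = 1) (hU' : Uᴴ * U = 1) : vnEntropy (U * ρ * Uᴴ) = vnEntropy ρ := by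
  set W : Matrix n n ℂ := (hρ.eigenvectorUnitary : Matrix n n ℂ) with hWdef
  have hW := (unitary_props hρ.eigenvectorUnitary).1
  have hW' := (unitary_props hρ.eigenvectorUnitary).2
  have hdecomp : U * ρ * Uᴴ = (U * W) * Matrix.diagonal (fun i => ((hρ.eigenvalues i : ℝ) : ℂ))
      * (U * W)ᴴ := by
    conv_lhs => rw [hρ.spectral_theorem]
    rw [Unitary.conjStarAlgAut_apply, Matrix.star_eq_conjTranspose, ← hWdef, Matrix.conjTranspose_mul]
    noncomm_ring
  have hUW : (U * W) * (U * W)ᴴ = 1 := by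
    rw [Matrix.conjTranspose_mul]
    calc U * W * (Wᴴ * Uᴴ) = U * (W * Wᴴ) * Uᴴ := by noncomm_ring
    _ = 1 := by rw [hW, mul_one, hU]
  have hherm : (U * ρ * Uᴴ).IsHermitian := isHermitian_of_decomp _ hdecomp
  rw [vnEntropy_eq hherm, vnEntropy_eq hρ]
  congr 1
  exact sum_f_eig hherm hUW hρ.eigenvalues hdecomp (fun t => t * Real.log t)

end Helpers

section PTrace

variable {a b : ℕ}

/-- The isometry-like selector matrix for the B-partial trace. -/
def selB (a : ℕ) {b : ℕ} (k : Fin b) : Matrix (Fin a) (Fin a × Fin b) ℂ :=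
  Matrix.of fun i p => if p = (i, k) then 1 else 0

def selA {a : ℕ} (b : ℕ) (k : Fin a) : Matrix (Fin b) (Fin a × Fin b) ℂ :=
  Matrix.of fun i p => if p = (k, i) then 1 else 0

lemma ptraceB_eq_sum (ρ : Matrix (Fin a × Fin b) (Fin a × Fin b) ℂ) :
    ptraceB ρ = ∑ k : Fin b, selB a k * ρ * (selB a k)ᴴ := by
  refine Matrix.ext fun i j => ?_
  rw [Matrix.sum_apply]
  show (∑ k : Fin b, ρ (i, k) (j, k)) = _
  refine Finset.sum_congr rfl fun k _ => ?_
  simp [Matrix.mul_apply, selB, Matrix.conjTranspose_apply, Fintype.sum_prod_type,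
    Prod.mk.injEq, ite_and, Finset.sum_ite_eq, Finset.sum_ite_eq', apply_ite]

lemma ptraceA_eq_sum (ρ : Matrix (Fin a × Fin b) (Fin a × Fin b) ℂ) :
    ptraceA ρ = ∑ k : Fin a, selA b k * ρ * (selA b k)ᴴ := by
  refine Matrix.ext fun i j => ?_
  rw [Matrix.sum_apply]
  show (∑ k : Fin a, ρ (k, i) (k, j)) = _
  refine Finset.sum_congr rfl fun k _ => ?_
  simp [Matrix.mul_apply, selA, Matrix.conjTranspose_apply, Fintype.sum_prod_type,
    Prod.mk.injEq, ite_and, Finset.sum_ite_eq, Finset.sum_ite_eq', apply_ite]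

lemma ptraceB_posSemidef {ρ : Matrix (Fin a × Fin b) (Fin a × Fin b) ℂ} (hρ : ρ.PosSemidef) :
    (ptraceB ρ).PosSemidef := by
  rw [ptraceB_eq_sum]
  exact Finset.sum_induction _ _ (fun x y hx hy => hx.add hy) (Matrix.PosSemidef.zero)
    (fun k _ => hρ.mul_mul_conjTranspose_same (selB a k))

lemma ptraceA_posSemidef {ρ : Matrix (Fin a × Fin b) (Fin a × Fin b) ℂ} (hρ : ρ.PosSemidef) :
    (ptraceA ρ).PosSemidef := by
  rw [ptraceA_eq_sum]
  exact Finset.sum_induction _ _ (fun x y hx hy => hx.add hy) (Matrix.PosSemidef.zero)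
    (fun k _ => hρ.mul_mul_conjTranspose_same (selA b k))

lemma ptraceB_trace (ρ : Matrix (Fin a × Fin b) (Fin a × Fin b) ℂ) :
    (ptraceB ρ).trace = ρ.trace := by
  rw [Matrix.trace, Matrix.trace, Fintype.sum_prod_type]
  rfl

lemma ptraceA_trace (ρ : Matrix (Fin a × Fin b) (Fin a × Fin b) ℂ) :
    (ptraceA ρ).trace = ρ.trace := by
  rw [Matrix.trace, Matrix.trace, Fintype.sum_prod_type, Finset.sum_comm]
  rfl

lemma ptraceB_trace_mul (ρ : Matrix (Fin a × Fin b) (Fin a × Fin b) ℂ)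
    (HA : Matrix (Fin a) (Fin a) ℂ) :
    (ptraceB ρ * HA).trace = (ρ * (HA ⊗ₖ (1 : Matrix (Fin b) (Fin b) ℂ))).trace := by
  rw [Matrix.trace, Matrix.trace]
  simp only [Matrix.diag_apply, Matrix.mul_apply, ptraceB, Matrix.of_apply,
    Matrix.kroneckerMap_apply, Matrix.one_apply, Fintype.sum_prod_type, Finset.sum_mul,
    mul_ite, mul_one, mul_zero, Finset.sum_ite_eq, Finset.sum_ite_eq', Finset.mem_univ, if_true]
  refine Finset.sum_congr rfl fun i _ => ?_
  rw [Finset.sum_comm]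

lemma ptraceA_trace_mul (ρ : Matrix (Fin a × Fin b) (Fin a × Fin b) ℂ)
    (HB : Matrix (Fin b) (Fin b) ℂ) :
    (ptraceA ρ * HB).trace = (ρ * ((1 : Matrix (Fin a) (Fin a) ℂ) ⊗ₖ HB)).trace := by
  rw [Matrix.trace, Matrix.trace]
  simp only [Matrix.diag_apply, Matrix.mul_apply, ptraceA, Matrix.of_apply,
    Matrix.kroneckerMap_apply, Matrix.one_apply, Fintype.sum_prod_type, Finset.sum_mul,
    mul_ite, mul_one, mul_zero, Finset.sum_ite_eq, Finset.sum_ite_eq', Finset.mem_univ, if_true,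
    ite_mul, zero_mul, one_mul]
  have hc : ∀ (i : Fin a) (k : Fin b),
      (∑ x2 : Fin a, ∑ x3 : Fin b, if x2 = i then ρ (i, k) (x2, x3) * HB x3 k else 0)
        = ∑ x3, ρ (i, k) (i, x3) * HB x3 k := by
    intro i k
    rw [Finset.sum_comm]
    refine Finset.sum_congr rfl fun x3 _ => ?_
    simp [Finset.sum_ite_eq, Finset.sum_ite_eq']
  calc ∑ k : Fin b, ∑ l : Fin b, ∑ i : Fin a, ρ (i, k) (i, l) * HB l k
      = ∑ k : Fin b, ∑ i : Fin a, ∑ l : Fin b, ρ (i, k) (i, l) * HB l k :=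
        Finset.sum_congr rfl fun k _ => Finset.sum_comm
    _ = ∑ i : Fin a, ∑ k : Fin b, ∑ l : Fin b, ρ (i, k) (i, l) * HB l k :=
        Finset.sum_comm
    _ = ∑ i : Fin a, ∑ k : Fin b, ∑ x2 : Fin a, ∑ x3 : Fin b,
          (if x2 = i then ρ (i, k) (x2, x3) * HB x3 k else 0) :=
        Finset.sum_congr rfl fun i _ => Finset.sum_congr rfl fun k _ => (hc i k).symm

end PTrace

/-- Modified Clausius inequality: for a bipartite state with thermal
marginals evolving under an energy-conserving unitary,
`(β_A − β_B)⟨Q_A⟩ ≥ ΔI(A:B)`. -/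
theorem modified_clausius
    {a b : ℕ} (HA : Matrix (Fin a) (Fin a) ℂ) (HB : Matrix (Fin b) (Fin b) ℂ)
    (hHA : HA.IsHermitian) (hHB : HB.IsHermitian) (βA βB : ℝ)
    (ρ : Matrix (Fin a × Fin b) (Fin a × Fin b) ℂ)
    (hρ : ρ.PosSemidef) (hρ1 : ρ.trace = 1)
    (hmargA : ptraceB ρ = gibbs βA HA) (hmargB : ptraceA ρ = gibbs βB HB)
    (U : Matrix (Fin a × Fin b) (Fin a × Fin b) ℂ)
    (hU : U * Uᴴ = 1 ∧ Uᴴ * U = 1)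
    (hcomm : U * (HA ⊗ₖ (1 : Matrix (Fin b) (Fin b) ℂ)
          + (1 : Matrix (Fin a) (Fin a) ℂ) ⊗ₖ HB)
        = (HA ⊗ₖ (1 : Matrix (Fin b) (Fin b) ℂ)
          + (1 : Matrix (Fin a) (Fin a) ℂ) ⊗ₖ HB) * U)
    (ρ' : Matrix (Fin a × Fin b) (Fin a × Fin b) ℂ) (hρ' : ρ' = U * ρ * Uᴴ) :
    (βA - βB) * ((ptraceB ρ' - ptraceB ρ) * HA).trace.re
      ≥ mutualInfo ρ' - mutualInfo ρ := by
  -- nontrivial dimensions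
  rcases Nat.eq_zero_or_pos a with ha | ha
  · exfalso
    subst ha
    rw [Matrix.trace] at hρ1
    simp at hρ1
  rcases Nat.eq_zero_or_pos b with hb | hb
  · exfalso
    subst hb
    rw [Matrix.trace] at hρ1
    simp at hρ1
  haveI : Nonempty (Fin a) := ⟨⟨0, ha⟩⟩
  haveI : Nonempty (Fin b) := ⟨⟨0, hb⟩⟩
  set K : Matrix (Fin a × Fin b) (Fin a × Fin b) ℂ :=
    HA ⊗ₖ (1 : Matrix (Fin b) (Fin b) ℂ) + (1 : Matrix (Fin a) (Fin a) ℂ) ⊗ₖ HB with hKdef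
  -- properties of ρ'
  have hρ'psd : ρ'.PosSemidef := by
    rw [hρ']
    exact hρ.mul_mul_conjTranspose_same U
  have hρ'1 : ρ'.trace = 1 := by
    rw [hρ', Matrix.trace_mul_cycle, hU.2, one_mul, hρ1]
  -- entropy invariance
  have hSinv : vnEntropy ρ' = vnEntropy ρ := by
    rw [hρ']
    exact vnEntropy_conj hρ.1 hU.1 hU.2
  -- marginal properties
  have hA'psd := ptraceB_posSemidef hρ'psd
  have hB'psd := ptraceA_posSemidef hρ'psd
  have hA'1 : (ptraceB ρ').trace = 1 := by rw [ptraceB_trace, hρ'1]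
  have hB'1 : (ptraceA ρ').trace = 1 := by rw [ptraceA_trace, hρ'1]
  -- entropy difference bounds
  have hineqA : vnEntropy (ptraceB ρ') - vnEntropy (ptraceB ρ)
      ≤ βA * ((ptraceB ρ' - ptraceB ρ) * HA).trace.re := by
    have := entropy_diff_le (ptraceB ρ') HA hA'psd hA'1 hHA βA
    rwa [← hmargA] at this
  have hineqB : vnEntropy (ptraceA ρ') - vnEntropy (ptraceA ρ)
      ≤ βB * ((ptraceA ρ' - ptraceA ρ) * HB).trace.re := by
    have := entropy_diff_le (ptraceA ρ') HB hB'psd hB'1 hHB βB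
    rwa [← hmargB] at this
  -- energy conservation
  have hKherm : Kᴴ = K := by
    have hk1 : (HA ⊗ₖ (1 : Matrix (Fin b) (Fin b) ℂ))ᴴ
        = HAᴴ ⊗ₖ (1 : Matrix (Fin b) (Fin b) ℂ)ᴴ := by
      refine Matrix.ext fun p q => ?_
      cases p with | mk i k => cases q with | mk j l =>
      simp only [Matrix.conjTranspose_apply, Matrix.kroneckerMap_apply, star_mul',
        mul_comm]
    have hk2 : ((1 : Matrix (Fin a) (Fin a) ℂ) ⊗ₖ HB)ᴴ
        = (1 : Matrix (Fin a) (Fin a) ℂ)ᴴ ⊗ₖ HBᴴ := by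
      refine Matrix.ext fun p q => ?_
      cases p with | mk i k => cases q with | mk j l =>
      simp only [Matrix.conjTranspose_apply, Matrix.kroneckerMap_apply, star_mul',
        mul_comm]
    rw [hKdef, Matrix.conjTranspose_add, hk1, hk2, Matrix.conjTranspose_one,
      Matrix.conjTranspose_one, hHA.eq, hHB.eq]
  have hcomm' : Uᴴ * K = K * Uᴴ := by
    have := congrArg Matrix.conjTranspose hcomm
    rw [Matrix.conjTranspose_mul, Matrix.conjTranspose_mul, hKherm] at this
    exact this.symm
  have htrK : (ρ' * K).trace = (ρ * K).trace := by
    have h1 : ρ' * K = U * (ρ * K) * Uᴴ := by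
      rw [hρ']
      calc U * ρ * Uᴴ * K = U * ρ * (Uᴴ * K) := by noncomm_ring
        _ = U * ρ * (K * Uᴴ) := by rw [hcomm']
        _ = U * (ρ * K) * Uᴴ := by noncomm_ring
    rw [h1, Matrix.trace_mul_cycle, hU.2, one_mul]
  have hsplit : ∀ σ : Matrix (Fin a × Fin b) (Fin a × Fin b) ℂ,
      (σ * K).trace = (ptraceB σ * HA).trace + (ptraceA σ * HB).trace := by
    intro σ
    rw [hKdef, Matrix.mul_add, Matrix.trace_add, ptraceB_trace_mul, ptraceA_trace_mul]
  have hE : (ptraceB ρ' * HA).trace + (ptraceA ρ' * HB).trace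
      = (ptraceB ρ * HA).trace + (ptraceA ρ * HB).trace := by
    rw [← hsplit, ← hsplit, htrK]
  have hEre : ((ptraceB ρ' - ptraceB ρ) * HA).trace.re
      + ((ptraceA ρ' - ptraceA ρ) * HB).trace.re = 0 := by
    have := congrArg Complex.re hE
    rw [Complex.add_re, Complex.add_re] at this
    rw [Matrix.sub_mul, Matrix.trace_sub, Complex.sub_re,
      Matrix.sub_mul, Matrix.trace_sub, Complex.sub_re]
    linarith
  -- final assembly
  have hQB : ((ptraceA ρ' - ptraceA ρ) * HB).trace.re
      = -((ptraceB ρ' - ptraceB ρ) * HA).trace.re := by linarith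
  rw [hQB] at hineqB
  have h2 : βB * (-((ptraceB ρ' - ptraceB ρ) * HA).trace.re)
      = -(βB * ((ptraceB ρ' - ptraceB ρ) * HA).trace.re) := by ring
  rw [h2] at hineqB
  have h3 : (βA - βB) * ((ptraceB ρ' - ptraceB ρ) * HA).trace.re
      = βA * ((ptraceB ρ' - ptraceB ρ) * HA).trace.re
        - βB * ((ptraceB ρ' - ptraceB ρ) * HA).trace.re := by ring
  rw [ge_iff_le, mutualInfo, mutualInfo, hSinv, h3]
  linarith
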